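/- Let G = (V,E) be a directed graph and 𝒫 = {P₁, …, Pₙ} a passage partitioning of G. Define V_iso = V \ (π₁(E) ∪ π₂(E)), V_in = π₁(E) \ π₂(E), V_out = π₂(E) \ π₁(E), V_con = ⋃_{i ≠ j} (π₂(Pᵢ) ∩ π₁(Pⱼ)), and V_loc = ⋃_i (π₁(Pᵢ) ∩ π₂(Pᵢ)). Then V = V_iso ∪ V_in ∪ V_out ∪ V_con ∪ V_loc and these five sets are pairwise disjoint, i.e., they partition V. -/

import Mathlib

/-- A passage of a directed graph with edge set `E`: a set `P ⊆ E` of edges such that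
for every `(x,y) ∈ P`, any edge of `E` with initial vertex `x` or terminal vertex `y`
is also in `P`. -/
def IsPassage {α : Type*} (E P : Set (α × α)) : Prop :=
  P ⊆ E ∧ ∀ x y, (x, y) ∈ P →
    (∀ y', (x, y') ∈ E → (x, y') ∈ P) ∧ (∀ x', (x', y) ∈ E → (x', y) ∈ P)


/-- A passage partitioning: a set of nonempty passages that are pairwise disjoint
and whose union is `E`. -/
def IsPassagePartitioning {α : Type*} (E : Set (α × α)) (𝓟 : Set (Set (α × α))) : Prop :=
  (∀ P ∈ 𝓟, IsPassage E P ∧ P ≠ ∅) ∧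
  (∀ P ∈ 𝓟, ∀ Q ∈ 𝓟, P ≠ Q → P ∩ Q = ∅) ∧
  ⋃₀ 𝓟 = E

/-- Given a passage partitioning, the vertices split into isolated vertices, input
vertices, output vertices, connecting vertices and local vertices; these five sets
are pairwise disjoint and their union is `V`. -/
theorem five_types_of_vertices {α : Type*} (V : Set α) (E : Set (α × α))
    (hE : E ⊆ V ×ˢ V) (𝓟 : Set (Set (α × α))) (h𝓟 : IsPassagePartitioning E 𝓟) :
    let π₁ : Set (α × α) → Set α := fun P => Prod.fst '' P
    let π₂ : Set (α × α) → Set α := fun P => Prod.snd '' P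
    let Viso : Set α := V \ (π₁ E ∪ π₂ E)
    let Vin : Set α := π₁ E \ π₂ E
    let Vout : Set α := π₂ E \ π₁ E
    let Vcon : Set α := {v | ∃ P ∈ 𝓟, ∃ Q ∈ 𝓟, P ≠ Q ∧ v ∈ π₂ P ∧ v ∈ π₁ Q}
    let Vloc : Set α := ⋃ P ∈ 𝓟, π₁ P ∩ π₂ P
    V = Viso ∪ Vin ∪ Vout ∪ Vcon ∪ Vloc ∧
      List.Pairwise Disjoint [Viso, Vin, Vout, Vcon, Vloc] := by
  obtain ⟨hpass, hdisj, hunion⟩ := h𝓟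
  intro π₁ π₂ Viso Vin Vout Vcon Vloc
  -- uniqueness of passage by initial vertex
  have uniq₁ : ∀ P ∈ 𝓟, ∀ Q ∈ 𝓟, ∀ v y y', (v, y) ∈ P → (v, y') ∈ Q → P = Q := by
    intro P hP Q hQ v y y' hy hy'
    by_contra hne
    have hE' : (v, y') ∈ E := ((hpass Q hQ).1).1 hy'
    have : (v, y') ∈ P := (((hpass P hP).1).2 v y hy).1 y' hE'
    have := hdisj P hP Q hQ hne
    exact absurd (Set.mem_inter ‹(v,y') ∈ P› hy') (by rw [this]; exact id)
  have uniq₂ : ∀ P ∈ 𝓟, ∀ Q ∈ 𝓟, ∀ v x x', (x, v) ∈ P → (x', v) ∈ Q → P = Q := by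
    intro P hP Q hQ v x x' hx hx'
    by_contra hne
    have hE' : (x', v) ∈ E := ((hpass Q hQ).1).1 hx'
    have : (x', v) ∈ P := (((hpass P hP).1).2 x v hx).2 x' hE'
    have := hdisj P hP Q hQ hne
    exact absurd (Set.mem_inter ‹(x',v) ∈ P› hx') (by rw [this]; exact id)
  -- membership in π₁ E gives a passage
  have mem₁ : ∀ v, v ∈ π₁ E → ∃ P ∈ 𝓟, v ∈ π₁ P := by
    intro v ⟨e, he, hv⟩
    rw [← hunion] at he
    obtain ⟨P, hP, heP⟩ := he
    exact ⟨P, hP, e, heP, hv⟩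
  have mem₂ : ∀ v, v ∈ π₂ E → ∃ P ∈ 𝓟, v ∈ π₂ P := by
    intro v ⟨e, he, hv⟩
    rw [← hunion] at he
    obtain ⟨P, hP, heP⟩ := he
    exact ⟨P, hP, e, heP, hv⟩
  have sub₁ : ∀ P ∈ 𝓟, π₁ P ⊆ π₁ E := fun P hP =>
    Set.image_mono ((hpass P hP).1).1
  have sub₂ : ∀ P ∈ 𝓟, π₂ P ⊆ π₂ E := fun P hP =>
    Set.image_mono ((hpass P hP).1).1
  constructor
  · ext v
    constructor
    · intro hv
      by_cases h1 : v ∈ π₁ E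
      · by_cases h2 : v ∈ π₂ E
        · obtain ⟨Q, hQ, hvQ⟩ := mem₁ v h1
          obtain ⟨P, hP, hvP⟩ := mem₂ v h2
          by_cases hPQ : P = Q
          · right
            exact Set.mem_biUnion hQ ⟨hvQ, hPQ ▸ hvP⟩
          · left; right
            exact ⟨P, hP, Q, hQ, hPQ, hvP, hvQ⟩
        · left; left; left; right; exact ⟨h1, h2⟩
      · by_cases h2 : v ∈ π₂ E
        · left; left; right; exact ⟨h2, h1⟩
        · left; left; left; left; exact ⟨hv, fun h => h.elim h1 h2⟩
    · intro hv
      rcases hv with ((((⟨h, _⟩ | ⟨h, _⟩) | ⟨h, _⟩) | ⟨P, hP, Q, hQ, _, h, _⟩) | h)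
      · exact h
      · obtain ⟨e, he, hv⟩ := h; exact hv ▸ (hE he).1
      · obtain ⟨e, he, hv⟩ := h; exact hv ▸ (hE he).2
      · obtain ⟨e, he, hv⟩ := sub₂ P hP h; exact hv ▸ (hE he).2
      · simp only [Vloc, Set.mem_iUnion] at h
        obtain ⟨P, hP, h, _⟩ := h
        obtain ⟨e, he, hv⟩ := sub₁ P hP h; exact hv ▸ (hE he).1
  · -- pairwise disjointness
    have hVconE₁ : Vcon ⊆ π₁ E := by
      rintro v ⟨P, hP, Q, hQ, _, _, hv⟩; exact sub₁ Q hQ hv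
    have hVconE₂ : Vcon ⊆ π₂ E := by
      rintro v ⟨P, hP, Q, hQ, _, hv, _⟩; exact sub₂ P hP hv
    have hVlocE₁ : Vloc ⊆ π₁ E := by
      intro v hv
      simp only [Vloc, Set.mem_iUnion] at hv
      obtain ⟨P, hP, h, _⟩ := hv; exact sub₁ P hP h
    have hVlocE₂ : Vloc ⊆ π₂ E := by
      intro v hv
      simp only [Vloc, Set.mem_iUnion] at hv
      obtain ⟨P, hP, _, h⟩ := hv; exact sub₂ P hP h
    have hConLoc : Disjoint Vcon Vloc := by
      rw [Set.disjoint_left]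
      rintro v ⟨P, hP, Q, hQ, hne, ⟨e, heP, hv₂⟩, ⟨f, hfQ, hv₁⟩⟩ hloc
      simp only [Vloc, Set.mem_iUnion] at hloc
      obtain ⟨R, hR, ⟨g, hgR, hg₁⟩, ⟨k, hkR, hk₂⟩⟩ := hloc
      have h1 : Q = R := uniq₁ Q hQ R hR v f.2 g.2
        (by rw [← hv₁]; exact hfQ) (by rw [← hg₁]; exact hgR)
      have h2 : P = R := uniq₂ P hP R hR v e.1 k.1
        (by rw [← hv₂]; exact heP) (by rw [← hk₂]; exact hkR)
      exact hne (h2.trans h1.symm)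
    refine List.Pairwise.cons ?_ (List.Pairwise.cons ?_ (List.Pairwise.cons ?_
      (List.Pairwise.cons ?_ (List.Pairwise.cons (by simp) List.Pairwise.nil))))
    · intro S hS
      have hSsub : S ⊆ π₁ E ∪ π₂ E := by
        simp only [List.mem_cons, List.not_mem_nil] at hS
        rcases hS with rfl | rfl | rfl | rfl | h
        · exact fun v hv => Or.inl hv.1
        · exact fun v hv => Or.inr hv.1
        · exact fun v hv => Or.inl (hVconE₁ hv)
        · exact fun v hv => Or.inl (hVlocE₁ hv)
        · exact absurd h (by simp)
      rw [Set.disjoint_left]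
      exact fun v hv hvS => hv.2 (hSsub hvS)
    · intro S hS
      have hSsub : S ⊆ π₂ E := by
        simp only [List.mem_cons, List.not_mem_nil] at hS
        rcases hS with rfl | rfl | rfl | h
        · exact fun v hv => hv.1
        · exact hVconE₂
        · exact hVlocE₂
        · exact absurd h (by simp)
      rw [Set.disjoint_left]
      exact fun v hv hvS => hv.2 (hSsub hvS)
    · intro S hS
      have hSsub : S ⊆ π₁ E := by
        simp only [List.mem_cons, List.not_mem_nil] at hS
        rcases hS with rfl | rfl | h
        · exact hVconE₁
        · exact hVlocE₁
        · exact absurd h (by simp)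
      rw [Set.disjoint_left]
      exact fun v hv hvS => hv.2 (hSsub hvS)
    · intro S hS
      simp only [List.mem_cons, List.not_mem_nil] at hS
      rcases hS with rfl | h
      · exact hConLoc
      · exact absurd h (by simp)
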